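/- Let 𝒮 be a λρ-system over a semigroup S such that for every monoid H, the λρ-product H^{[𝒮]} is a monoid. Then S is a monoid, and λ[a,1] = id_{I[a]} and ρ[1,a] = id_{I[a]} for all a∈S. -/

import Mathlib

/-- The multiplication of the λρ-product `H^[𝒮]`. -/
def lrMul {S : Type} [Mul S] (I : S → Type) (lam : ∀ a b : S, I (a * b) → I a)
    (rho : ∀ a b : S, I (a * b) → I b) (H : Type) [Mul H]
    (p q : Σ a : S, I a → H) : Σ a : S, I a → H :=
  ⟨p.1 * q.1, fun i => p.2 (lam p.1 q.1 i) * q.2 (rho p.1 q.1 i)⟩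

private lemma funext_heq {H A B : Type} (h : A = B) {g : A → H} {k : B → H}
    (hg : HEq g k) (x : A) : g x = k (cast h x) := by
  subst h
  exact congrFun (eq_of_heq hg) x

/-- If the λρ-product `H^[𝒮]` is a monoid for every monoid `H`, then the skeleton `S`
is a monoid and `λ[a,1] = id_{I[a]}`, `ρ[1,a] = id_{I[a]}` for all `a ∈ S`. -/
theorem stmt11 {S : Type} [Semigroup S] (I : S → Type)
    (lam : ∀ a b : S, I (a * b) → I a) (rho : ∀ a b : S, I (a * b) → I b)
    (alpha : ∀ (a b c : S) (x : I (a * b * c)),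
      lam a b (lam (a * b) c x) = lam a (b * c) (cast (congrArg I (mul_assoc a b c)) x))
    (beta : ∀ (a b c : S) (x : I (a * b * c)),
      rho b c (rho a (b * c) (cast (congrArg I (mul_assoc a b c)) x)) = rho (a * b) c x)
    (gamma : ∀ (a b c : S) (x : I (a * b * c)),
      rho a b (lam (a * b) c x) = lam b c (rho a (b * c) (cast (congrArg I (mul_assoc a b c)) x)))
    (hmon : ∀ (H : Type) [Monoid H], ∃ e : Σ a : S, I a → H,
      ∀ p : Σ a : S, I a → H,
        lrMul I lam rho H e p = p ∧ lrMul I lam rho H p e = p) :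
    ∃ one : S, ∃ (hl : ∀ s : S, one * s = s) (hr : ∀ s : S, s * one = s),
      (∀ (a : S) (x : I (a * one)), lam a one x = cast (congrArg I (hr a)) x) ∧
      (∀ (a : S) (x : I (one * a)), rho one a x = cast (congrArg I (hl a)) x) := by
  obtain ⟨e0, he0⟩ := hmon PUnit
  have hl : ∀ s : S, e0.1 * s = s := fun s =>
    congrArg Sigma.fst ((he0 ⟨s, fun _ => PUnit.unit⟩).1)
  have hr : ∀ s : S, s * e0.1 = s := fun s =>
    congrArg Sigma.fst ((he0 ⟨s, fun _ => PUnit.unit⟩).2)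
  refine ⟨e0.1, hl, hr, ?_, ?_⟩
  · -- lam a one = cast
    intro a x
    letI : Mul (I a) := ⟨fun u _ => u⟩
    letI : Semigroup (I a) := ⟨fun _ _ _ => rfl⟩
    obtain ⟨⟨b, f⟩, he⟩ := hmon (WithOne (I a))
    have hb : b = e0.1 := by
      have h1 : e0.1 * b = e0.1 :=
        congrArg Sigma.fst ((he ⟨e0.1, fun _ => 1⟩).2)
      rw [← h1, hl]
    subst hb
    have h2 := (he ⟨a, fun y => (↑y : WithOne (I a))⟩).2
    have h4 : HEq (fun i : I (a * e0.1) =>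
        (↑(lam a e0.1 i) : WithOne (I a)) * f (rho a e0.1 i))
        (fun y : I a => (↑y : WithOne (I a))) := (Sigma.ext_iff.mp h2).2
    have key := funext_heq (congrArg I (hr a)) h4 x
    have cancel : ∀ (u v : I a) (w : WithOne (I a)),
        (↑u : WithOne (I a)) * w = ↑v → u = v := by
      intro u v w h
      cases w with
      | one =>
        have : (↑u : WithOne (I a)) * (1 : WithOne (I a)) = ↑v := h
        rw [mul_one] at this
        exact WithOne.coe_inj.mp this
      | coe c =>
        have : (↑u : WithOne (I a)) * (↑c : WithOne (I a)) = ↑v := h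
        rw [← WithOne.coe_mul] at this
        exact WithOne.coe_inj.mp this
    exact cancel _ _ _ key
  · -- rho one a = cast
    intro a x
    letI : Mul (I a) := ⟨fun _ v => v⟩
    letI : Semigroup (I a) := ⟨fun _ _ _ => rfl⟩
    obtain ⟨⟨b, f⟩, he⟩ := hmon (WithOne (I a))
    have hb : b = e0.1 := by
      have h1 : e0.1 * b = e0.1 :=
        congrArg Sigma.fst ((he ⟨e0.1, fun _ => 1⟩).2)
      rw [← h1, hl]
    subst hb
    have h2 := (he ⟨a, fun y => (↑y : WithOne (I a))⟩).1
    have h4 : HEq (fun i : I (e0.1 * a) =>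
        f (lam e0.1 a i) * (↑(rho e0.1 a i) : WithOne (I a)))
        (fun y : I a => (↑y : WithOne (I a))) := (Sigma.ext_iff.mp h2).2
    have key := funext_heq (congrArg I (hl a)) h4 x
    have cancel : ∀ (u v : I a) (w : WithOne (I a)),
        w * (↑u : WithOne (I a)) = ↑v → u = v := by
      intro u v w h
      cases w with
      | one =>
        have : (1 : WithOne (I a)) * (↑u : WithOne (I a)) = ↑v := h
        rw [one_mul] at this
        exact WithOne.coe_inj.mp this
      | coe c =>
        have : (↑c : WithOne (I a)) * (↑u : WithOne (I a)) = ↑v := h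
        rw [← WithOne.coe_mul] at this
        exact WithOne.coe_inj.mp this
    exact cancel _ _ _ key
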